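/- Key square-root integral estimate (inequality (3.7)): let H ∈ (1/2,1), T > 0, δ ∈ (0,T], β ≥ 0, and let u, w : [−δ, T] → [0,∞) be Lebesgue measurable. Then ( ∫₀ᵀ [ e^{βs} ( u(s−δ) + w(s−δ) ) ]^{1/2} ds )² ≤ 2 e^{βT} ( 2T + 2T^{2−2H}/(2−2H) ) ∫_{−δ}^{T} e^{βs} ( u(s) + |s|^{2H−1} w(s) ) ds. -/

import Mathlib

open MeasureTheory Set ENNReal

lemma my_shift (f : ℝ → ℝ≥0∞) (a b c : ℝ) :
    ∫⁻ s in Set.Icc a b, f (s - c) = ∫⁻ t in Set.Icc (a - c) (b - c), f t := by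
  have hemb : MeasurableEmbedding (fun x : ℝ => x - c) :=
    (MeasurableEquiv.subRight c).measurableEmbedding
  have h := (measurePreserving_sub_right (volume : Measure ℝ) c).setLIntegral_comp_emb
      hemb f (Set.Icc a b)
  rwa [Set.image_sub_const_Icc] at h

lemma my_neg (f : ℝ → ℝ≥0∞) (a b : ℝ) :
    ∫⁻ s in Set.Icc a b, f (-s) = ∫⁻ t in Set.Icc (-b) (-a), f t := by
  have hemb : MeasurableEmbedding (fun x : ℝ => -x) :=
    (MeasurableEquiv.neg ℝ).measurableEmbedding
  have h := (Measure.measurePreserving_neg (volume : Measure ℝ)).setLIntegral_comp_emb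
      hemb f (Set.Icc a b)
  rwa [show (fun x : ℝ => -x) '' Set.Icc a b = Set.Icc (-b) (-a) by
    rw [Set.image_neg_eq_neg, Set.neg_Icc]] at h

lemma my_sq_rpow (x : ℝ≥0∞) : (x ^ (1/2 : ℝ)) ^ 2 = x := by
  rw [← ENNReal.rpow_natCast (x ^ (1/2:ℝ)) 2, ← ENNReal.rpow_mul]
  norm_num

lemma my_cs (μ : Measure ℝ) (f g : ℝ → ℝ≥0∞) (hf : AEMeasurable f μ) (hg : AEMeasurable g μ) :
    (∫⁻ x, (f x * g x) ^ (1/2 : ℝ) ∂μ) ^ 2 ≤ (∫⁻ x, f x ∂μ) * ∫⁻ x, g x ∂μ := by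
  have h2 : (2:ℝ).HolderConjugate 2 := ⟨by norm_num, by norm_num, by norm_num⟩
  have h := ENNReal.lintegral_mul_le_Lp_mul_Lq μ h2
      (hf.pow_const (1/2:ℝ)) (hg.pow_const (1/2:ℝ))
  simp only [Pi.mul_apply] at h
  have heq : ∀ x : ℝ≥0∞, (x ^ (1/2:ℝ)) ^ (2:ℝ) = x := by
    intro x; rw [← ENNReal.rpow_mul]; norm_num
  simp only [heq, ← ENNReal.mul_rpow_of_nonneg _ _ (by norm_num : (0:ℝ) ≤ 1/2)] at h
  calc (∫⁻ x, (f x * g x) ^ (1/2 : ℝ) ∂μ) ^ 2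
      ≤ (((∫⁻ x, f x ∂μ) * ∫⁻ x, g x ∂μ) ^ (1/2:ℝ)) ^ 2 :=
        pow_le_pow_left' h 2
    _ = (∫⁻ x, f x ∂μ) * ∫⁻ x, g x ∂μ := my_sq_rpow _

lemma my_amgm (a b : ℝ≥0∞) : 2 * (a * b) ≤ a ^ 2 + b ^ 2 := by
  induction a using ENNReal.recTopCoe with
  | top =>
    rcases eq_or_ne b 0 with rfl | hb
    · simp
    · have : (⊤:ℝ≥0∞) ^ 2 = ⊤ := by simp [pow_two]
      rw [this, top_add]; exact le_top
  | coe a =>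
    induction b using ENNReal.recTopCoe with
    | top =>
      rcases eq_or_ne (a : ℝ≥0∞) 0 with h | h
      · simp [h]
      · have : (⊤:ℝ≥0∞) ^ 2 = ⊤ := by simp [pow_two]
        rw [this, add_top]; exact le_top
    | coe b =>
      rw [← ENNReal.coe_two, ← ENNReal.coe_mul, ← ENNReal.coe_mul, ← ENNReal.coe_pow,
        ← ENNReal.coe_pow, ← ENNReal.coe_add, ENNReal.coe_le_coe, ← NNReal.coe_le_coe]
      push_cast
      nlinarith [sq_nonneg ((a:ℝ) - (b:ℝ))]

lemma my_sq_add (X Y : ℝ≥0∞) : (X + Y) ^ 2 ≤ 2 * X ^ 2 + 2 * Y ^ 2 := by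
  have h : (X + Y) ^ 2 = X ^ 2 + 2 * (X * Y) + Y ^ 2 := by ring
  rw [h]
  calc X ^ 2 + 2 * (X * Y) + Y ^ 2 ≤ X ^ 2 + (X ^ 2 + Y ^ 2) + Y ^ 2 := by
        gcongr; exact my_amgm X Y
    _ = 2 * X ^ 2 + 2 * Y ^ 2 := by ring

lemma my_rpow_int (c : ℝ) (hc : 0 < c) {p : ℝ} (hp : -1 < p) :
    ∫⁻ t in Set.Icc (0:ℝ) c, ENNReal.ofReal (t ^ p) = ENNReal.ofReal (c ^ (p+1) / (p+1)) := by
  have hIcc : ∫⁻ t in Set.Icc (0:ℝ) c, ENNReal.ofReal (t ^ p)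
      = ∫⁻ t in Set.Ioc (0:ℝ) c, ENNReal.ofReal (t ^ p) :=
    (setLIntegral_congr (Ioc_ae_eq_Icc (μ := volume))).symm
  have hi : IntervalIntegrable (fun t : ℝ => t ^ p) volume 0 c :=
    intervalIntegral.intervalIntegrable_rpow' hp
  have hval : ∫ t in Set.Ioc (0:ℝ) c, t ^ p = c ^ (p+1) / (p+1) := by
    rw [← intervalIntegral.integral_of_le hc.le, integral_rpow (Or.inl hp),
      Real.zero_rpow (by linarith : p + 1 ≠ 0)]
    ring
  rw [hIcc, ← hval, ← ofReal_integral_eq_lintegral_ofReal]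
  · exact hi.1
  · filter_upwards [ae_restrict_mem measurableSet_Ioc] with t ht
    exact Real.rpow_nonneg ht.1.le p

lemma my_abs_rpow_half (c : ℝ) {p : ℝ} :
    ∫⁻ s in Set.Icc (0:ℝ) c, ENNReal.ofReal (|s| ^ p)
    = ∫⁻ s in Set.Icc (0:ℝ) c, ENNReal.ofReal (s ^ p) := by
  apply lintegral_congr_ae
  filter_upwards [ae_restrict_mem measurableSet_Icc] with s hs
  rw [abs_of_nonneg hs.1]

lemma my_abs_rpow_bound (c : ℝ) (hc : 0 < c) {p : ℝ} (hp : -1 < p) :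
    ∫⁻ t in Set.Icc (-c) c, ENNReal.ofReal (|t| ^ p)
      ≤ ENNReal.ofReal (2 * (c ^ (p+1) / (p+1))) := by
  have hsub : Set.Icc (-c) c ⊆ Set.Icc (-c) 0 ∪ Set.Icc (0:ℝ) c := by
    intro t ht
    rcases le_total t 0 with h | h
    · exact Or.inl ⟨ht.1, h⟩
    · exact Or.inr ⟨h, ht.2⟩
  calc ∫⁻ t in Set.Icc (-c) c, ENNReal.ofReal (|t| ^ p)
      ≤ ∫⁻ t in Set.Icc (-c) 0 ∪ Set.Icc (0:ℝ) c, ENNReal.ofReal (|t| ^ p) :=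
        lintegral_mono_set hsub
    _ ≤ (∫⁻ t in Set.Icc (-c) 0, ENNReal.ofReal (|t| ^ p))
        + ∫⁻ t in Set.Icc (0:ℝ) c, ENNReal.ofReal (|t| ^ p) :=
        lintegral_union_le _ _ _
    _ = (∫⁻ t in Set.Icc (0:ℝ) c, ENNReal.ofReal (|t| ^ p))
        + ∫⁻ t in Set.Icc (0:ℝ) c, ENNReal.ofReal (|t| ^ p) := by
        congr 1
        have h := my_neg (fun t => ENNReal.ofReal (|t| ^ p)) 0 c
        simp only [neg_zero, abs_neg] at h
        exact h.symm
    _ = ENNReal.ofReal (c ^ (p+1) / (p+1)) + ENNReal.ofReal (c ^ (p+1) / (p+1)) := by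
        rw [my_abs_rpow_half, my_rpow_int c hc hp]
    _ = ENNReal.ofReal (2 * (c ^ (p+1) / (p+1))) := by
        have h1 : (0:ℝ) ≤ c ^ (p+1) / (p+1) :=
          div_nonneg (Real.rpow_nonneg hc.le _) (by linarith)
        rw [two_mul, ENNReal.ofReal_add h1 h1]

theorem sqrt_integral_estimate
    (H T δ β : ℝ) (hH : H ∈ Set.Ioo (1/2 : ℝ) 1) (hT : 0 < T)
    (hδ : δ ∈ Set.Ioc 0 T) (hβ : 0 ≤ β)
    (u w : ℝ → ℝ≥0∞) (hu : Measurable u) (hw : Measurable w) :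
    (∫⁻ s in Set.Icc (0:ℝ) T,
        (ENNReal.ofReal (Real.exp (β * s)) * (u (s - δ) + w (s - δ))) ^ (1/2 : ℝ)) ^ 2
      ≤ ENNReal.ofReal (2 * Real.exp (β * T) * (2*T + 2*T ^ (2 - 2*H) / (2 - 2*H))) *
        ∫⁻ s in Set.Icc (-δ) T,
          ENNReal.ofReal (Real.exp (β * s)) *
            (u s + ENNReal.ofReal (|s| ^ (2*H - 1)) * w s) := by
  obtain ⟨hH1, hH2⟩ := hH
  obtain ⟨hδ0, hδT⟩ := hδ
  have hq : (-1:ℝ) < 1 - 2*H := by linarith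
  have h2H : (0:ℝ) < 2 - 2*H := by linarith
  set I0 : ℝ≥0∞ := ∫⁻ s in Set.Icc (-δ) T,
      ENNReal.ofReal (Real.exp (β * s)) * (u s + ENNReal.ofReal (|s| ^ (2*H - 1)) * w s)
    with hI0
  set F : ℝ → ℝ≥0∞ := fun s => ENNReal.ofReal (Real.exp (β * s)) * u (s - δ) with hF
  set G : ℝ → ℝ≥0∞ := fun s => ENNReal.ofReal (Real.exp (β * s)) * w (s - δ) with hG
  set W : ℝ → ℝ≥0∞ := fun s => ENNReal.ofReal (|s - δ| ^ (1 - 2*H)) with hW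
  set V : ℝ → ℝ≥0∞ := fun s => ENNReal.ofReal (|s - δ| ^ (2*H - 1)) * G s with hV
  have hmexp : Measurable fun s : ℝ => ENNReal.ofReal (Real.exp (β * s)) :=
    ENNReal.measurable_ofReal.comp (Real.measurable_exp.comp (measurable_id.const_mul β))
  have hmF : Measurable F := hmexp.mul (hu.comp (measurable_id.sub_const δ))
  have hmG : Measurable G := hmexp.mul (hw.comp (measurable_id.sub_const δ))
  have hmW : Measurable W :=
    ENNReal.measurable_ofReal.comp
      (((measurable_id.sub_const δ).abs).pow_const (1 - 2*H))
  have hmV : Measurable V :=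
    (ENNReal.measurable_ofReal.comp
      (((measurable_id.sub_const δ).abs).pow_const (2*H - 1))).mul hmG
  -- step 1: subadditivity of sqrt
  have h1 : (∫⁻ s in Set.Icc (0:ℝ) T,
      (ENNReal.ofReal (Real.exp (β * s)) * (u (s - δ) + w (s - δ))) ^ (1/2 : ℝ))
      ≤ (∫⁻ s in Set.Icc (0:ℝ) T, (F s) ^ (1/2:ℝ))
        + ∫⁻ s in Set.Icc (0:ℝ) T, (G s) ^ (1/2:ℝ) := by
    rw [← lintegral_add_left (hmF.pow_const _)]
    apply lintegral_mono fun s => ?_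
    rw [hF, hG]
    simp only [mul_add]
    exact ENNReal.rpow_add_le_add_rpow _ _ (by norm_num) (by norm_num)
  -- step 2: Cauchy-Schwarz for the u-part
  have hA : (∫⁻ s in Set.Icc (0:ℝ) T, (F s) ^ (1/2:ℝ)) ^ 2
      ≤ ENNReal.ofReal T * ∫⁻ s in Set.Icc (0:ℝ) T, F s := by
    have h := my_cs (volume.restrict (Set.Icc (0:ℝ) T)) (fun _ => 1) F
      aemeasurable_const hmF.aemeasurable
    simpa [Real.volume_Icc] using h
  -- translation bound for the u-part
  have hFle : ∫⁻ s in Set.Icc (0:ℝ) T, F s ≤ ENNReal.ofReal (Real.exp (β*T)) * I0 := by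
    calc ∫⁻ s in Set.Icc (0:ℝ) T, F s
        = ∫⁻ s in Set.Icc (0:ℝ) T,
            (fun t => ENNReal.ofReal (Real.exp (β * (t + δ))) * u t) (s - δ) := by
          apply lintegral_congr fun s => ?_
          rw [hF]; simp [sub_add_cancel]
      _ = ∫⁻ t in Set.Icc (0 - δ) (T - δ), ENNReal.ofReal (Real.exp (β * (t + δ))) * u t :=
          my_shift (fun t => ENNReal.ofReal (Real.exp (β * (t + δ))) * u t) 0 T δ
      _ ≤ ∫⁻ t in Set.Icc (-δ) T, ENNReal.ofReal (Real.exp (β * (t + δ))) * u t := by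
          rw [zero_sub]
          exact lintegral_mono_set (Set.Icc_subset_Icc le_rfl (by linarith))
      _ ≤ ∫⁻ t in Set.Icc (-δ) T,
            ENNReal.ofReal (Real.exp (β*T)) * (ENNReal.ofReal (Real.exp (β * t)) * u t) := by
          apply lintegral_mono fun t => ?_
          calc ENNReal.ofReal (Real.exp (β * (t + δ))) * u t
              ≤ ENNReal.ofReal (Real.exp (β*T) * Real.exp (β * t)) * u t := by
                apply mul_le_mul_left
                apply ENNReal.ofReal_le_ofReal
                rw [← Real.exp_add]
                exact Real.exp_le_exp.2 (by nlinarith)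
            _ = ENNReal.ofReal (Real.exp (β*T)) * (ENNReal.ofReal (Real.exp (β * t)) * u t) := by
                rw [ENNReal.ofReal_mul (Real.exp_nonneg _), mul_assoc]
      _ = ENNReal.ofReal (Real.exp (β*T)) *
            ∫⁻ t in Set.Icc (-δ) T, ENNReal.ofReal (Real.exp (β * t)) * u t :=
          lintegral_const_mul' _ _ ENNReal.ofReal_ne_top
      _ ≤ ENNReal.ofReal (Real.exp (β*T)) * I0 := by
          apply mul_le_mul_right
          exact lintegral_mono fun t => mul_le_mul_right le_self_add _
  -- a.e. factorization for the w-part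
  have hGae : ∫⁻ s in Set.Icc (0:ℝ) T, (G s) ^ (1/2:ℝ)
      = ∫⁻ s in Set.Icc (0:ℝ) T, (W s * V s) ^ (1/2:ℝ) := by
    apply lintegral_congr_ae
    have hne : ∀ᵐ s ∂(volume.restrict (Set.Icc (0:ℝ) T)), s ≠ δ := by
      refine ae_restrict_of_ae ?_
      rw [ae_iff]
      have : {s : ℝ | ¬ s ≠ δ} = {δ} := by ext s; simp
      rw [this]
      exact Real.volume_singleton
    filter_upwards [hne] with s hs
    have hx : 0 < |s - δ| := abs_pos.2 (sub_ne_zero.2 hs)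
    have hone : |s - δ| ^ (1 - 2*H) * |s - δ| ^ (2*H - 1) = 1 := by
      rw [← Real.rpow_add hx]
      norm_num
    congr 1
    rw [hV, hW, ← mul_assoc,
      ← ENNReal.ofReal_mul (Real.rpow_nonneg (abs_nonneg _) _), hone]
    simp
  have hB : (∫⁻ s in Set.Icc (0:ℝ) T, (G s) ^ (1/2:ℝ)) ^ 2
      ≤ (∫⁻ s in Set.Icc (0:ℝ) T, W s) * ∫⁻ s in Set.Icc (0:ℝ) T, V s := by
    rw [hGae]
    exact my_cs _ W V hmW.aemeasurable hmV.aemeasurable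
  -- the weight integral
  have hWle : ∫⁻ s in Set.Icc (0:ℝ) T, W s
      ≤ ENNReal.ofReal (2 * (T ^ (2 - 2*H) / (2 - 2*H))) := by
    have hb := my_abs_rpow_bound T hT hq
    rw [show (1 - 2*H) + 1 = 2 - 2*H by ring] at hb
    calc ∫⁻ s in Set.Icc (0:ℝ) T, W s
        = ∫⁻ t in Set.Icc (0 - δ) (T - δ), ENNReal.ofReal (|t| ^ (1 - 2*H)) :=
          my_shift (fun t => ENNReal.ofReal (|t| ^ (1 - 2*H))) 0 T δ
      _ ≤ ∫⁻ t in Set.Icc (-T) T, ENNReal.ofReal (|t| ^ (1 - 2*H)) :=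
          lintegral_mono_set (Set.Icc_subset_Icc (by linarith) (by linarith))
      _ ≤ ENNReal.ofReal (2 * (T ^ (2 - 2*H) / (2 - 2*H))) := hb
  -- translation bound for the weighted w-part
  have hVle : ∫⁻ s in Set.Icc (0:ℝ) T, V s ≤ ENNReal.ofReal (Real.exp (β*T)) * I0 := by
    calc ∫⁻ s in Set.Icc (0:ℝ) T, V s
        = ∫⁻ s in Set.Icc (0:ℝ) T,
            (fun t => ENNReal.ofReal (|t| ^ (2*H - 1)) *
              (ENNReal.ofReal (Real.exp (β * (t + δ))) * w t)) (s - δ) := by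
          apply lintegral_congr fun s => ?_
          rw [hV, hG]; simp [sub_add_cancel]
      _ = ∫⁻ t in Set.Icc (0 - δ) (T - δ), ENNReal.ofReal (|t| ^ (2*H - 1)) *
            (ENNReal.ofReal (Real.exp (β * (t + δ))) * w t) :=
          my_shift (fun t => ENNReal.ofReal (|t| ^ (2*H - 1)) *
            (ENNReal.ofReal (Real.exp (β * (t + δ))) * w t)) 0 T δ
      _ ≤ ∫⁻ t in Set.Icc (-δ) T, ENNReal.ofReal (|t| ^ (2*H - 1)) *
            (ENNReal.ofReal (Real.exp (β * (t + δ))) * w t) := by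
          rw [zero_sub]
          exact lintegral_mono_set (Set.Icc_subset_Icc le_rfl (by linarith))
      _ ≤ ∫⁻ t in Set.Icc (-δ) T, ENNReal.ofReal (Real.exp (β*T)) *
            (ENNReal.ofReal (Real.exp (β * t)) *
              (u t + ENNReal.ofReal (|t| ^ (2*H - 1)) * w t)) := by
          apply lintegral_mono fun t => ?_
          calc ENNReal.ofReal (|t| ^ (2*H - 1)) *
                (ENNReal.ofReal (Real.exp (β * (t + δ))) * w t)
              ≤ ENNReal.ofReal (|t| ^ (2*H - 1)) *
                (ENNReal.ofReal (Real.exp (β*T) * Real.exp (β * t)) * w t) := by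
                apply mul_le_mul_right
                apply mul_le_mul_left
                apply ENNReal.ofReal_le_ofReal
                rw [← Real.exp_add]
                exact Real.exp_le_exp.2 (by nlinarith)
            _ = ENNReal.ofReal (Real.exp (β*T)) * (ENNReal.ofReal (Real.exp (β * t)) *
                  (ENNReal.ofReal (|t| ^ (2*H - 1)) * w t)) := by
                rw [ENNReal.ofReal_mul (Real.exp_nonneg _)]
                ring
            _ ≤ ENNReal.ofReal (Real.exp (β*T)) * (ENNReal.ofReal (Real.exp (β * t)) *
                  (u t + ENNReal.ofReal (|t| ^ (2*H - 1)) * w t)) := by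
                apply mul_le_mul_right
                exact mul_le_mul_right le_add_self _
      _ = ENNReal.ofReal (Real.exp (β*T)) * I0 :=
          lintegral_const_mul' _ _ ENNReal.ofReal_ne_top
  -- put everything together
  have e0 : (0:ℝ) ≤ Real.exp (β*T) := (Real.exp_pos _).le
  have c20 : (0:ℝ) ≤ T ^ (2 - 2*H) / (2 - 2*H) :=
    div_nonneg (Real.rpow_nonneg hT.le _) h2H.le
  have two_of : ∀ x : ℝ, ENNReal.ofReal (2*x) = 2 * ENNReal.ofReal x := fun x => by
    rw [ENNReal.ofReal_mul (by norm_num : (0:ℝ) ≤ 2)]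
    norm_num
  have key : 2 * (ENNReal.ofReal T * ENNReal.ofReal (Real.exp (β*T)))
      + 2 * (ENNReal.ofReal (2 * (T ^ (2 - 2*H) / (2 - 2*H))) * ENNReal.ofReal (Real.exp (β*T)))
      ≤ ENNReal.ofReal (2 * Real.exp (β*T) * (2*T + 2*T ^ (2 - 2*H) / (2 - 2*H))) := by
    rw [← ENNReal.ofReal_mul hT.le,
      ← ENNReal.ofReal_mul (by linarith : (0:ℝ) ≤ 2 * (T ^ (2 - 2*H) / (2 - 2*H))),
      ← two_of, ← two_of,
      ← ENNReal.ofReal_add (by nlinarith) (by nlinarith)]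
    apply ENNReal.ofReal_le_ofReal
    have hring : 2 * Real.exp (β*T) * (2*T + 2*T ^ (2 - 2*H) / (2 - 2*H))
        = 2 * (T * Real.exp (β*T))
          + 2 * (2 * (T ^ (2 - 2*H) / (2 - 2*H)) * Real.exp (β*T))
          + 2 * (T * Real.exp (β*T)) := by ring
    rw [hring]
    linarith [mul_nonneg hT.le e0]
  calc (∫⁻ s in Set.Icc (0:ℝ) T,
        (ENNReal.ofReal (Real.exp (β * s)) * (u (s - δ) + w (s - δ))) ^ (1/2 : ℝ)) ^ 2
      ≤ ((∫⁻ s in Set.Icc (0:ℝ) T, (F s) ^ (1/2:ℝ))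
          + ∫⁻ s in Set.Icc (0:ℝ) T, (G s) ^ (1/2:ℝ)) ^ 2 := pow_le_pow_left' h1 2
    _ ≤ 2 * (∫⁻ s in Set.Icc (0:ℝ) T, (F s) ^ (1/2:ℝ)) ^ 2
        + 2 * (∫⁻ s in Set.Icc (0:ℝ) T, (G s) ^ (1/2:ℝ)) ^ 2 := my_sq_add _ _
    _ ≤ 2 * (ENNReal.ofReal T * (ENNReal.ofReal (Real.exp (β*T)) * I0))
        + 2 * (ENNReal.ofReal (2 * (T ^ (2 - 2*H) / (2 - 2*H)))
            * (ENNReal.ofReal (Real.exp (β*T)) * I0)) := by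
        gcongr
        · exact hA.trans (mul_le_mul_right hFle _)
        · exact hB.trans (mul_le_mul' hWle hVle)
    _ = (2 * (ENNReal.ofReal T * ENNReal.ofReal (Real.exp (β*T)))
        + 2 * (ENNReal.ofReal (2 * (T ^ (2 - 2*H) / (2 - 2*H)))
            * ENNReal.ofReal (Real.exp (β*T)))) * I0 := by ring
    _ ≤ ENNReal.ofReal (2 * Real.exp (β*T) * (2*T + 2*T ^ (2 - 2*H) / (2 - 2*H))) * I0 :=
        mul_le_mul_left key I0
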